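/- arXiv:1708.06782 — 7 statements merged into one kernel-verified Lean document; each statement's English description precedes it below -/
import Mathlib

section
/- Let μ ≤ θ be infinite cardinals with μ regular. Then θ^{<μ} = cf([θ]^{<μ}, ⊆) · 2^{<μ}, where cf([θ]^{<μ}, ⊆) is the least cardinality of a cofinal family in the poset of subsets of θ of size less than μ ordered by inclusion, and θ^{<μ} = sup_{α<μ} θ^{|α|}. -/
open Cardinal Set

universe u

lemma mk_small_subsets_le (μ θ : Cardinal.{u}) (hμ : ℵ₀ ≤ μ) (hθ : ℵ₀ ≤ θ) (hμθ : μ ≤ θ) :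
    #{s : Set θ.out | #s < μ} ≤ θ ^< μ := by
  classical
  haveI : IsWellOrder μ.ord.ToType (· < ·) := isWellOrder_lt
  have htype : Ordinal.type ((· < ·) : μ.ord.ToType → μ.ord.ToType → Prop) = μ.ord := Ordinal.type_toType _
  have key : ∀ s : {s : Set θ.out | #s < μ},
      ∃ p : Σ b : μ.ord.ToType, ({y : μ.ord.ToType // y < b} → θ.out), Set.range p.2 = (s : Set θ.out) := by
    rintro ⟨s, hs⟩
    have ho : (#s).ord < μ.ord := by
      rw [Cardinal.lt_ord, Cardinal.card_ord]; exact hs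
    let b : μ.ord.ToType := Ordinal.enum (· < ·) ⟨(#s).ord, by rwa [htype]⟩
    have hcard : #{y : μ.ord.ToType // y < b} = #s := by
      rw [← Ordinal.card_typein (r := (· < ·))]
      exact (congrArg Ordinal.card (Ordinal.typein_enum _ _)).trans (Cardinal.card_ord _)
    obtain ⟨e⟩ := Cardinal.eq.1 hcard
    refine ⟨⟨b, fun y => (e y : θ.out)⟩, ?_⟩
    show Set.range (Subtype.val ∘ e) = s
    rw [Set.range_comp, e.range_eq_univ, Set.image_univ, Subtype.range_coe]
  choose Φ hΦ using key
  have h1 : #{s : Set θ.out | #s < μ} ≤ #(Σ b : μ.ord.ToType, ({y : μ.ord.ToType // y < b} → θ.out)) := by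
    refine ⟨⟨Φ, fun s s' h => ?_⟩⟩
    apply Subtype.ext
    rw [← hΦ s, ← hΦ s', h]
  refine h1.trans ?_
  have h2 : #(Σ b : μ.ord.ToType, ({y : μ.ord.ToType // y < b} → θ.out))
      = Cardinal.sum (fun b : μ.ord.ToType => θ ^ #{y : μ.ord.ToType // y < b}) := by
    rw [Cardinal.mk_sigma]
    congr 1; funext b
    rw [← Cardinal.power_def, Cardinal.mk_out]
  rw [h2]
  have h3 : Cardinal.sum (fun b : μ.ord.ToType => θ ^ #{y : μ.ord.ToType // y < b})
      ≤ #μ.ord.ToType * ⨆ b : μ.ord.ToType, θ ^ #{y : μ.ord.ToType // y < b} := Cardinal.sum_le_mk_mul_iSup _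
  refine h3.trans ?_
  have hbd : ∀ b : μ.ord.ToType, θ ^ #{y : μ.ord.ToType // y < b} ≤ θ ^< μ := by
    intro b
    apply Cardinal.le_powerlt
    rw [← Ordinal.card_typein (r := (· < ·)), ← Cardinal.lt_ord]
    exact Ordinal.typein_lt_self b
  have hsup : (⨆ b : μ.ord.ToType, θ ^ #{y : μ.ord.ToType // y < b}) ≤ θ ^< μ := ciSup_le' hbd
  have hθle : θ ≤ θ ^< μ := by
    have := Cardinal.le_powerlt θ (lt_of_lt_of_le Cardinal.one_lt_aleph0 hμ)
    rwa [Cardinal.power_one] at this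
  have hTμ : #μ.ord.ToType = μ := by rw [Cardinal.mk_toType, Cardinal.card_ord]
  calc #μ.ord.ToType * ⨆ b : μ.ord.ToType, θ ^ #{y : μ.ord.ToType // y < b} ≤ (θ ^< μ) * (θ ^< μ) := by
        apply mul_le_mul' _ hsup
        rw [hTμ]; exact hμθ.trans hθle
    _ = θ ^< μ := Cardinal.mul_eq_self (hθ.trans hθle)

/-- The cofinality of the poset `([θ]^{<μ}, ⊆)`: the least cardinality of a family of
subsets of (a set of cardinality) `θ`, each of size `< μ`, such that every subset of size
`< μ` is contained in a member of the family. -/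
noncomputable def smallSubsetCof (μ θ : Cardinal.{u}) : Cardinal.{u} :=
  sInf { c | ∃ F : Set (Set θ.out), (∀ s ∈ F, #s < μ) ∧ #F = c ∧
    ∀ s : Set θ.out, #s < μ → ∃ t ∈ F, s ⊆ t }

/-- For `μ ≤ θ` infinite with `μ` regular, `θ^{<μ} = cf([θ]^{<μ}, ⊆) · 2^{<μ}`. -/
theorem stmt0 (μ θ : Cardinal.{u}) (hμ : μ.IsRegular) (hθ : ℵ₀ ≤ θ) (hμθ : μ ≤ θ) :
    θ ^< μ = smallSubsetCof μ θ * (2 ^< μ) := by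
  classical
  have hμ0 : ℵ₀ ≤ μ := hμ.aleph0_le
  have hθle : θ ≤ θ ^< μ := by
    have := Cardinal.le_powerlt θ (lt_of_lt_of_le Cardinal.one_lt_aleph0 hμ0)
    rwa [Cardinal.power_one] at this
  have hinf : ℵ₀ ≤ θ ^< μ := hθ.trans hθle
  -- the set defining smallSubsetCof is nonempty (the family of all small sets works)
  have hmem : #{s : Set θ.out | #s < μ} ∈ { c | ∃ F : Set (Set θ.out), (∀ s ∈ F, #s < μ) ∧ #F = c ∧
      ∀ s : Set θ.out, #s < μ → ∃ t ∈ F, s ⊆ t } :=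
    ⟨{s | #s < μ}, fun s hs => hs, rfl, fun s hs => ⟨s, hs, subset_rfl⟩⟩
  have hcof_le : smallSubsetCof μ θ ≤ θ ^< μ :=
    (csInf_le' hmem).trans (mk_small_subsets_le μ θ hμ0 hθ hμθ)
  have h2le : (2 : Cardinal) ^< μ ≤ θ ^< μ := by
    refine Cardinal.powerlt_le.2 fun c hc => ?_
    exact (Cardinal.power_le_power_right ((Cardinal.nat_lt_aleph0 2).le.trans_eq (by norm_num) |>.trans hθ
      )).trans (Cardinal.le_powerlt θ hc)
  -- get a witness family realizing the infimum
  obtain ⟨F, hF_small, hF_card, hF_cof⟩ := csInf_mem (Set.nonempty_of_mem hmem)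
  have hF_card' : #F = smallSubsetCof μ θ := hF_card
  -- hard direction: θ ^< μ ≤ cof * 2 ^< μ
  have hmain : θ ^< μ ≤ smallSubsetCof μ θ * (2 ^< μ) := by
    refine Cardinal.powerlt_le.2 fun c hc => ?_
    -- θ ^ c = #(c.out → θ.out)
    have harrow : #(c.out → θ.out) = θ ^ c := by
      rw [← Cardinal.power_def, Cardinal.mk_out, Cardinal.mk_out]
    rw [← harrow]
    have key : ∀ f : c.out → θ.out, ∃ t : F, Set.range f ⊆ (t : Set θ.out) := by
      intro f
      have : #(Set.range f) < μ := lt_of_le_of_lt (Cardinal.mk_range_le.trans_eq (Cardinal.mk_out c)) hc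
      obtain ⟨t, ht, hsub⟩ := hF_cof _ this
      exact ⟨⟨t, ht⟩, hsub⟩
    choose T hT using key
    have hinj : Function.Injective (fun f : c.out → θ.out =>
        (⟨T f, fun i => ⟨f i, hT f (Set.mem_range_self i)⟩⟩ :
          Σ t : F, (c.out → ((t : Set θ.out) : Type u)))) := by
      intro f g h
      funext i
      have h2 := congrArg (fun p : Σ t : F, (c.out → ((t : Set θ.out) : Type u)) =>
        fun i => (p.2 i : θ.out)) h
      exact congrFun h2 i
    have hle1 : #(c.out → θ.out) ≤ #(Σ t : F, (c.out → ((t : Set θ.out) : Type u))) := ⟨⟨_, hinj⟩⟩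
    refine hle1.trans ?_
    rw [Cardinal.mk_sigma]
    have hbd : ∀ t : F, #(c.out → ((t : Set θ.out) : Type u)) ≤ 2 ^< μ := by
      intro t
      have h1 : #(c.out → ((t : Set θ.out) : Type u)) = #(t : Set θ.out) ^ c := by
        rw [← Cardinal.power_def, Cardinal.mk_out]
      rw [h1]
      have h2 : #(t : Set θ.out) ^ c ≤ (2 ^ #(t : Set θ.out)) ^ c :=
        Cardinal.power_le_power_right (Cardinal.cantor _).le
      refine h2.trans ?_
      rw [← Cardinal.power_mul]
      exact Cardinal.le_powerlt 2 (Cardinal.mul_lt_of_lt hμ0 (hF_small t t.2) hc)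
    calc Cardinal.sum (fun t : F => #(c.out → ((t : Set θ.out) : Type u)))
        ≤ #F * ⨆ t : F, #(c.out → ((t : Set θ.out) : Type u)) := Cardinal.sum_le_mk_mul_iSup _
      _ ≤ smallSubsetCof μ θ * (2 ^< μ) := by
          rw [← hF_card']; exact mul_le_mul' le_rfl (ciSup_le' hbd)
  refine le_antisymm hmain ?_
  calc smallSubsetCof μ θ * (2 ^< μ) ≤ (θ ^< μ) * (θ ^< μ) := mul_le_mul' hcof_le h2le
    _ = θ ^< μ := Cardinal.mul_eq_self hinf
end

section
/- Let μ < λ be regular cardinals with λ > 2^{<μ}. If for every θ < λ the cofinality of the poset ([θ]^{<μ}, ⊆) is less than λ, then λ is μ-closed, i.e., θ^{<μ} < λ for all θ < λ. -/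
open Cardinal

universe u

/-- If `μ < λ` are regular, `λ > 2^{<μ}`, and the cofinality of `([θ]^{<μ}, ⊆)` is less
than `λ` for all `θ < λ`, then `λ` is `μ`-closed. -/
theorem stmt2 (μ l : Cardinal.{u}) (hμ : μ.IsRegular) (hl : l.IsRegular) (hμl : μ < l)
    (h2 : 2 ^< μ < l) (hcof : ∀ θ < l, smallSubsetCof μ θ < l) :
    ∀ θ < l, θ ^< μ < l := by
  intro θ hθ
  -- the set defining `smallSubsetCof μ θ` is nonempty
  have hne : { c | ∃ F : Set (Set θ.out), (∀ s ∈ F, #s < μ) ∧ #F = c ∧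
      ∀ s : Set θ.out, #s < μ → ∃ t ∈ F, s ⊆ t }.Nonempty := by
    refine ⟨#({s : Set θ.out | #s < μ}), {s : Set θ.out | #s < μ}, fun s hs => hs, rfl, ?_⟩
    exact fun s hs => ⟨s, hs, subset_rfl⟩
  obtain ⟨F, hF₁, hF₂, hF₃⟩ := csInf_mem hne
  have hFlt : #F < l := hF₂ ▸ hcof θ hθ
  -- main bound: θ ^< μ ≤ #F * 2 ^< μ
  have hbound : θ ^< μ ≤ #F * (2 ^< μ) := by
    rw [powerlt_le]
    intro κ hκ
    -- injection from (κ.out → θ.out) into Σ t : F, (κ.out → t)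
    have key : #(κ.out → θ.out) ≤ #(Σ t : F, (κ.out → (t : Set θ.out))) := by
      choose T hTF hTsub using fun f : κ.out → θ.out =>
        hF₃ (Set.range f) (lt_of_le_of_lt mk_range_le (by rwa [mk_out]))
      refine mk_le_of_injective (f := fun f => (⟨⟨T f, hTF f⟩,
        fun i => ⟨f i, hTsub f (Set.mem_range_self i)⟩⟩ :
          Σ t : F, (κ.out → (t : Set θ.out)))) ?_
      intro f g h
      have := congrArg (fun p : Σ t : F, (κ.out → (t : Set θ.out)) =>
        fun i => ((p.2 i : θ.out))) h
      exact this
    have : θ ^ κ ≤ #(Σ t : F, (κ.out → (t : Set θ.out))) := by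
      calc θ ^ κ = #(κ.out → θ.out) := by rw [← power_def, mk_out, mk_out]
        _ ≤ _ := key
    refine this.trans ?_
    rw [mk_sigma]
    calc (Cardinal.sum fun t : F => #(κ.out → (t : Set θ.out)))
        ≤ Cardinal.sum (fun _ : F => 2 ^< μ) := by
          apply sum_le_sum
          intro t
          have h1 : #(κ.out → (t : Set θ.out)) = (#(t : Set θ.out)) ^ κ := by
            rw [← power_def, mk_out]
          rw [h1]
          have htμ : #(t : Set θ.out) < μ := hF₁ t t.2
          have hmul : #(t : Set θ.out) * κ < μ := mul_lt_of_lt hμ.aleph0_le htμ hκ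
          calc (#(t : Set θ.out)) ^ κ ≤ (2 ^ #(t : Set θ.out)) ^ κ :=
                power_le_power_right (cantor _).le
            _ = 2 ^ (#(t : Set θ.out) * κ) := by rw [← power_mul]
            _ ≤ 2 ^< μ := le_powerlt 2 hmul
      _ = #F * (2 ^< μ) := sum_const' _ _
  exact hbound.trans_lt (mul_lt_of_lt hl.aleph0_le hFlt h2)
end

section
/- Let μ ≤ λ be infinite cardinals with μ regular and cf(λ) ≥ μ. Then λ^{<μ} is the least almost μ-closed cardinal λ' ≥ λ, where a cardinal λ' is almost μ-closed if θ^{<μ} ≤ λ' for all θ < λ'. -/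
open Cardinal

universe u

/-- A cardinal `ν` is almost `μ`-closed if `θ^{<μ} ≤ ν` for all `θ < ν`. -/
def AlmostMuClosed (μ ν : Cardinal.{u}) : Prop := ∀ θ < ν, θ ^< μ ≤ ν

lemma pow_le_of_lt_cof {κ l l' : Cardinal.{u}} (hκ : κ < l.ord.cof) (hl : ℵ₀ ≤ l)
    (hl' : l ≤ l') (hb : ∀ θ, θ < l → θ ^ κ ≤ l') : l ^ κ ≤ l' := by
  have h1 : l ^ κ = #(κ.out → l.ord.ToType) := by
    rw [← Cardinal.power_def, mk_ord_toType, mk_out]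
  rw [h1]
  have hbd : ∀ f : κ.out → l.ord.ToType, ∃ a, ∀ i, f i < a := by
    intro f
    have hbd : Set.Bounded (· < ·) (Set.range f) := by
      haveI : IsWellOrder l.ord.ToType (· < ·) := isWellOrder_lt
      by_contra h
      have hc : IsCofinal (Set.range f) := fun a => by
        by_contra h'
        push_neg at h'
        exact h ⟨a, fun b hb => h' b hb⟩
      have hcof := Ordinal.lt_cof_type hc
      rw [Ordinal.cof_toType] at hcof
      exact (hcof.trans (mk_range_le.trans_eq (mk_out κ))).not_gt hκ
    obtain ⟨a, ha⟩ := hbd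
    exact ⟨a, fun i => ha _ (Set.mem_range_self i)⟩
  choose F hF using hbd
  have hle : #(κ.out → l.ord.ToType) ≤
      #(Σ a : l.ord.ToType, (κ.out → Set.Iio a)) := by
    apply mk_le_of_injective (f := fun f => ⟨F f, fun i => ⟨f i, hF f i⟩⟩)
    intro f g h
    funext i
    exact congrArg (fun p : Σ a : l.ord.ToType, (κ.out → Set.Iio a) => (p.2 i : l.ord.ToType)) h
  refine hle.trans ?_
  rw [mk_sigma]
  calc (Cardinal.sum fun a : l.ord.ToType => #(κ.out → Set.Iio a))
      ≤ Cardinal.sum fun _ : l.ord.ToType => l' := by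
        apply Cardinal.sum_le_sum
        intro a
        rw [← Cardinal.power_def, mk_out]
        exact hb _ (mk_Iio_ord_toType a)
    _ = l * l' := by rw [Cardinal.sum_const', mk_ord_toType]
    _ = l' := mul_eq_right (hl.trans hl') hl' (aleph0_pos.trans_le hl).ne'

/-- If `μ ≤ λ` are infinite, `μ` regular, and `cf(λ) ≥ μ`, then `λ^{<μ}` is the least
almost `μ`-closed cardinal `λ' ≥ λ`. -/
theorem stmt3 (μ l : Cardinal.{u}) (hμ : μ.IsRegular) (hl : ℵ₀ ≤ l) (hμl : μ ≤ l)
    (hcf : μ ≤ l.ord.cof) :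
    IsLeast { l' : Cardinal.{u} | l ≤ l' ∧ AlmostMuClosed μ l' } (l ^< μ) := by
  constructor
  · constructor
    · calc l = l ^ (1 : Cardinal) := (power_one l).symm
        _ ≤ l ^< μ := le_powerlt l (one_lt_aleph0.trans_le hμ.aleph0_le)
    · intro θ hθ
      rw [powerlt_le]
      intro κ hκ
      have : ∃ κ₀ < μ, θ < l ^ κ₀ := by
        by_contra h
        push_neg at h
        exact hθ.not_ge (powerlt_le.mpr h)
      obtain ⟨κ₀, hκ₀, hθκ₀⟩ := this
      calc θ ^ κ ≤ (l ^ κ₀) ^ κ := power_le_power_right hθκ₀.le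
        _ = l ^ (κ₀ * κ) := power_mul.symm
        _ ≤ l ^< μ := le_powerlt l (mul_lt_of_lt hμ.aleph0_le hκ₀ hκ)
  · rintro l' ⟨hll', hac⟩
    rw [powerlt_le]
    intro κ hκ
    apply pow_le_of_lt_cof (hκ.trans_le hcf) hl hll'
    intro θ hθl
    calc θ ^ κ ≤ θ ^< μ := le_powerlt θ hκ
      _ ≤ l' := hac θ (hθl.trans_le hll')
end

section
/- Let μ ≤ λ be infinite cardinals with μ regular and cf(λ) < μ. Then λ^{<μ} is the least almost μ-closed cardinal λ' strictly greater than λ. -/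
open Cardinal

universe u

/-- If `μ ≤ λ` are infinite, `μ` regular, and `cf(λ) < μ`, then `λ^{<μ}` is the least
almost `μ`-closed cardinal strictly greater than `λ`. -/
theorem stmt4 (μ l : Cardinal.{u}) (hμ : μ.IsRegular) (hl : ℵ₀ ≤ l) (hμl : μ ≤ l)
    (hcf : l.ord.cof < μ) :
    IsLeast { l' : Cardinal.{u} | l < l' ∧ AlmostMuClosed μ l' } (l ^< μ) := by
  constructor
  · constructor
    · calc l < l ^ l.ord.cof := Cardinal.lt_power_cof hl
        _ ≤ l ^< μ := Cardinal.le_powerlt l hcf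
    · intro θ hθ
      -- find κ0 < μ with θ < l ^ κ0
      obtain ⟨κ0, hκ0, hθκ0⟩ : ∃ κ0 < μ, θ < l ^ κ0 := by
        by_contra h
        push_neg at h
        exact absurd ((Cardinal.powerlt_le).mpr h) (not_le_of_gt hθ)
      rw [Cardinal.powerlt_le]
      intro κ hκ
      calc θ ^ κ ≤ (l ^ κ0) ^ κ := Cardinal.power_le_power_right hθκ0.le
        _ = l ^ (κ0 * κ) := (Cardinal.power_mul ..).symm
        _ ≤ l ^< μ := Cardinal.le_powerlt l
            (Cardinal.mul_lt_of_lt hμ.aleph0_le hκ0 hκ)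
  · rintro l' ⟨hll', hcl⟩
    exact hcl l hll'
end

section
/- Let μ ≤ λ be infinite cardinals with μ regular. Then λ is μ-closed (θ^{<μ} < λ for all θ < λ) if and only if: (a) there is an unbounded set S ⊆ λ of cardinals each of which is almost μ-closed, and (b) λ is not the successor of a cardinal of cofinality less than μ. -/
open Cardinal

universe u

private lemma key_pow_le {θ c : Cardinal.{u}} (hθ : ℵ₀ ≤ θ) (hc : c < θ.ord.cof)
    (h : ∀ σ < θ, σ ^ c ≤ θ) : θ ^ c ≤ θ := by
  have hmkα : #θ.ord.ToType = θ := by rw [Cardinal.mk_toType, Cardinal.card_ord]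
  haveI : Nonempty θ.ord.ToType := Ordinal.nonempty_toType_iff.2 (by
    simp only [ne_eq, Cardinal.ord_eq_zero]
    exact fun h0 => (aleph0_pos.trans_le hθ).ne' h0)
  have hlim : Order.IsSuccLimit θ.ord := Cardinal.isSuccLimit_ord hθ
  have bound : ∀ f : c.out → θ.ord.ToType, ∃ b : θ.ord.ToType, ∀ i, f i < b := by
    intro f
    set e := (Ordinal.ToType.mk (o := θ.ord)) with he
    have hs : (⨆ i, ((e.symm (f i) : Set.Iio θ.ord) : Ordinal)) < θ.ord :=
      Ordinal.iSup_lt_ord (by rw [mk_out]; exact hc) fun i => (e.symm (f i)).2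
    have hs1 : Order.succ (⨆ i, ((e.symm (f i) : Set.Iio θ.ord) : Ordinal)) < θ.ord :=
      hlim.succ_lt hs
    refine ⟨e ⟨_, hs1⟩, fun i => ?_⟩
    have hfi : f i = e (e.symm (f i)) := (e.apply_symm_apply _).symm
    rw [hfi, e.lt_iff_lt, ← Subtype.coe_lt_coe]
    exact (Ordinal.le_iSup _ i).trans_lt (Order.lt_succ _)
  choose b hb using bound
  have step1 : θ ^ c = #(c.out → θ.ord.ToType) := by
    have hpd := power_def θ.ord.ToType c.out
    rw [hmkα, mk_out] at hpd
    exact hpd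
  have step2 : #(c.out → θ.ord.ToType) ≤ #(Σ b : θ.ord.ToType, (c.out → Set.Iio b)) := by
    refine mk_le_of_injective (f := fun f => ⟨b f, fun i => ⟨f i, hb f i⟩⟩) ?_
    intro f g hfg
    funext i
    exact congrArg (fun p : (Σ b : θ.ord.ToType, (c.out → Set.Iio b)) => (p.2 i).1) hfg
  have step3 : #(Σ b : θ.ord.ToType, (c.out → Set.Iio b)) ≤ θ := by
    rw [mk_sigma]
    refine (sum_le_mk_mul_iSup _).trans ?_
    have hsup : (⨆ x : θ.ord.ToType, #(c.out → Set.Iio x)) ≤ θ := by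
      refine ciSup_le' fun x => ?_
      have hpd := power_def (Set.Iio x) c.out
      rw [mk_out] at hpd
      rw [← hpd]
      exact h _ (Cardinal.mk_Iio_ord_toType x)
    calc #θ.ord.ToType * ⨆ x : θ.ord.ToType, #(c.out → Set.Iio x) ≤ θ * θ := by
          rw [hmkα]; exact mul_le_mul' le_rfl hsup
      _ = θ := mul_eq_self hθ
  rw [step1]
  exact step2.trans step3

/-- `λ` is `μ`-closed iff (a) there is an unbounded set of almost `μ`-closed cardinals
below `λ` and (b) `λ` is not the successor of a cardinal of cofinality less than `μ`. -/
theorem stmt6 (μ l : Cardinal.{u}) (hμ : μ.IsRegular) (hl : ℵ₀ ≤ l) (hμl : μ ≤ l) :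
    (∀ θ < l, θ ^< μ < l) ↔
      ((∃ S : Set Cardinal.{u},
          (∀ ν ∈ S, ν < l ∧ AlmostMuClosed μ ν) ∧ ∀ θ < l, ∃ ν ∈ S, θ ≤ ν) ∧
        ¬ ∃ l₀ : Cardinal.{u}, l = Order.succ l₀ ∧ l₀.ord.cof < μ) := by
  have hμ0 : ℵ₀ ≤ μ := hμ.aleph0_le
  have h1μ : (1 : Cardinal) < μ := one_lt_aleph0.trans_le hμ0
  constructor
  · intro h
    constructor
    · refine ⟨{ν | ν < l ∧ AlmostMuClosed μ ν}, fun ν hν => hν, fun θ hθ => ?_⟩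
      refine ⟨θ ^< μ, ⟨h θ hθ, ?_⟩, ?_⟩
      · intro σ hσ
        obtain ⟨x, hx, hσx⟩ : ∃ x < μ, σ < θ ^ x := by
          by_contra hcon
          push_neg at hcon
          exact hσ.not_ge (powerlt_le.2 fun x hx => hcon x hx)
        refine powerlt_le.2 fun d hd => ?_
        calc σ ^ d ≤ (θ ^ x) ^ d := power_le_power_right hσx.le
          _ = θ ^ (x * d) := by rw [power_mul]
          _ ≤ θ ^< μ := le_powerlt θ (mul_lt_of_lt hμ0 hx hd)
      · calc θ = θ ^ (1 : Cardinal) := (power_one θ).symm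
          _ ≤ θ ^< μ := le_powerlt θ h1μ
    · rintro ⟨l₀, rfl, hcof⟩
      have hl₀ : ℵ₀ ≤ l₀ := by
        by_contra hcon
        push_neg at hcon
        obtain ⟨n, rfl⟩ := lt_aleph0.1 hcon
        rw [← Cardinal.nat_succ] at hl
        exact (nat_lt_aleph0 (n + 1)).not_ge hl
      have h2 : l₀ < l₀ ^< μ :=
        (lt_power_cof hl₀).trans_le (le_powerlt l₀ hcof)
      exact ((h l₀ (Order.lt_succ l₀)).trans_le (Order.succ_le_of_lt h2)).false
  · rintro ⟨⟨S, hS1, hS2⟩, hsucc⟩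
    have claim1 : ∀ σ : Cardinal, Order.succ σ < l → σ ^< μ < l := by
      intro σ hσ
      obtain ⟨ν, hνS, hν⟩ := hS2 (Order.succ σ) hσ
      obtain ⟨hνl, hνcl⟩ := hS1 ν hνS
      exact (hνcl σ ((Order.lt_succ σ).trans_le hν)).trans_lt hνl
    intro θ hθ
    rcases lt_or_eq_of_le (Order.succ_le_of_lt hθ) with hlt | heq
    · exact claim1 θ hlt
    · -- l = succ θ
      have hcof : μ ≤ θ.ord.cof := by
        by_contra hcon
        push_neg at hcon
        exact hsucc ⟨θ, heq.symm, hcon⟩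
      have hθinf : ℵ₀ ≤ θ := by
        by_contra hcon
        push_neg at hcon
        obtain ⟨n, rfl⟩ := lt_aleph0.1 hcon
        rw [← heq, ← Cardinal.nat_succ] at hl
        exact (nat_lt_aleph0 (n + 1)).not_ge hl
      rw [← heq, Order.lt_succ_iff]
      refine powerlt_le.2 fun x hx => ?_
      refine key_pow_le hθinf (hx.trans_le hcof) fun σ hσ => ?_
      have hσsucc : Order.succ σ < l := by
        rw [← heq] at hθ ⊢
        exact (Order.succ_le_of_lt hσ).trans_lt hθ
      have := claim1 σ hσsucc
      rw [← heq, Order.lt_succ_iff] at this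
      exact (le_powerlt σ hx).trans this
end

section
/- Let μ, λ' be regular cardinals with μ ≤ λ'. Let C be a category with μ-directed colimits and let M be the colimit of a μ-directed diagram indexed by a poset I with |I| < λ', all of whose objects are λ'-presentable. Then M is λ'-presentable. -/
open Cardinal CategoryTheory CategoryTheory.Limits Opposite

universe v u

/-- A preorder is `μ`-directed if every subset of cardinality `< μ` has an upper bound. -/
def IsMuDirected (μ : Cardinal.{v}) (J : Type v) [Preorder J] : Prop :=
  ∀ S : Set J, #S < μ → ∃ b, ∀ j ∈ S, j ≤ b

/-- An object `M` is `μ`-presentable if its hom-functor `Hom(M, -)` preserves colimits of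
all `μ`-directed diagrams. -/
def IsMuPresentable (μ : Cardinal.{v}) {C : Type u} [Category.{v} C] (M : C) : Prop :=
  ∀ (J : Type v) [Preorder J], IsMuDirected μ J →
    Nonempty (PreservesColimitsOfShape J (coyoneda.obj (op M)))

/-- Let `μ ≤ λ'` be regular, `C` a category with `μ`-directed colimits, and `M` the
colimit of a `μ`-directed diagram indexed by a poset `I` with `|I| < λ'` all of whose
objects are `λ'-presentable`. Then `M` is `λ'`-presentable. -/
theorem stmt11 {C : Type u} [Category.{v} C] (μ l : Cardinal.{v})
    (hμ : μ.IsRegular) (hl : l.IsRegular) (hμl : μ ≤ l)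
    (hC : ∀ (J : Type v) [Preorder J], IsMuDirected μ J → HasColimitsOfShape J C)
    (I : Type v) [PartialOrder I] (hI : IsMuDirected μ I) (hIcard : #I < l)
    (D : I ⥤ C) (c : Cocone D) (hc : IsColimit c)
    (hobj : ∀ i : I, IsMuPresentable l (D.obj i)) :
    IsMuPresentable l c.pt := by
  intro J _instJ hJ
  have haleph : ℵ₀ ≤ l := hl.aleph0_le
  have hne : Nonempty J := by
    obtain ⟨b, -⟩ := hJ ∅ (by simpa using lt_of_lt_of_le Cardinal.aleph0_pos haleph)
    exact ⟨b⟩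
  have hdir : IsDirected J (· ≤ ·) := ⟨fun a b => by
    obtain ⟨z, hz⟩ := hJ {a, b}
      (lt_of_lt_of_le (((Set.finite_singleton b).insert a).lt_aleph0) haleph)
    exact ⟨z, hz a (by simp), hz b (by simp)⟩⟩
  -- upper bounds of small families
  have hubI : ∀ {α : Type v}, #α < l → ∀ f : α → J, ∃ b, ∀ a, f a ≤ b := by
    intro α hα f
    obtain ⟨b, hb⟩ := hJ (Set.range f) (lt_of_le_of_lt Cardinal.mk_range_le hα)
    exact ⟨b, fun a => hb _ ⟨a, rfl⟩⟩
  have hIIcard : #(I × I) < l := by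
    rw [Cardinal.mk_prod]
    simp only [Cardinal.lift_id]
    exact Cardinal.mul_lt_of_lt haleph hIcard hIcard
  refine ⟨⟨fun {F} => ⟨fun {s} hs => ?_⟩⟩⟩
  have hcol : ∀ i : I, IsColimit ((coyoneda.obj (op (D.obj i))).mapCocone s) := fun i =>
    haveI := (hobj i J hJ).some
    isColimitOfPreserves _ hs
  refine ⟨Types.FilteredColimit.isColimitOf _ _ ?_ ?_⟩
  · -- surjectivity: every map `c.pt ⟶ s.pt` factors through a stage
    intro f
    choose j0 g hg using fun i => Types.jointly_surjective _ (hcol i) (c.ι.app i ≫ f)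
    have hg' : ∀ i, g i ≫ s.ι.app (j0 i) = c.ι.app i ≫ f := fun i => hg i
    obtain ⟨b0, hb0⟩ := hubI hIcard j0
    set h : ∀ i, D.obj i ⟶ F.obj b0 := fun i => g i ≫ F.map (homOfLE (hb0 i)) with hh_def
    have hh : ∀ i, h i ≫ s.ι.app b0 = c.ι.app i ≫ f := by
      intro i
      rw [hh_def]
      dsimp only
      rw [Category.assoc, s.w (homOfLE (hb0 i)), hg']
    have key : ∀ p : I × I, ∃ k : J, ∃ hk : b0 ≤ k, ∀ hle : p.1 ≤ p.2,
        D.map (homOfLE hle) ≫ h p.2 ≫ F.map (homOfLE hk) = h p.1 ≫ F.map (homOfLE hk) := by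
      rintro ⟨i, i'⟩
      by_cases hle : i ≤ i'
      · have heq : ((coyoneda.obj (op (D.obj i))).mapCocone s).ι.app b0
              (D.map (homOfLE hle) ≫ h i')
            = ((coyoneda.obj (op (D.obj i))).mapCocone s).ι.app b0 (h i) := by
          dsimp
          rw [Category.assoc, hh i', ← Category.assoc, c.w (homOfLE hle), hh i]
        rw [Types.FilteredColimit.isColimit_eq_iff _ (hcol i)] at heq
        obtain ⟨k, u, v, huv⟩ := heq
        refine ⟨k, leOfHom u, fun hle' => ?_⟩
        have : (homOfLE (leOfHom u) : b0 ⟶ k) = u := Subsingleton.elim _ _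
        rw [this]
        have hv : v = u := Subsingleton.elim _ _
        dsimp at huv
        rw [← Category.assoc, huv, hv]
      · exact ⟨b0, le_refl _, fun hle' => absurd hle' hle⟩
    choose k hk1 hk2 using key
    obtain ⟨b1', hb1'⟩ := hubI hIIcard k
    obtain ⟨b1, hb1a, hb1b⟩ := directed_of (· ≤ ·) b0 b1'
    have hkb1 : ∀ p : I × I, k p ≤ b1 := fun p => (hb1' p).trans hb1b
    have hb0b1 : b0 ≤ b1 := hb1a
    have hnat : ∀ {i i' : I} (φ : i ⟶ i'),
        D.map φ ≫ (h i' ≫ F.map (homOfLE hb0b1)) = h i ≫ F.map (homOfLE hb0b1) := by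
      intro i i' φ
      have hle : i ≤ i' := leOfHom φ
      have h1 := hk2 (i, i') hle
      rw [show φ = homOfLE hle from Subsingleton.elim _ _,
        show (homOfLE hb0b1 : b0 ⟶ b1)
          = homOfLE (hk1 (i, i')) ≫ homOfLE (hkb1 (i, i')) from Subsingleton.elim _ _,
        F.map_comp]
      rw [reassoc_of% h1]
    let E : Cocone D :=
      { pt := F.obj b1
        ι := {
          app := fun i => h i ≫ F.map (homOfLE hb0b1)
          naturality := fun {i i'} φ => by
            dsimp
            rw [Category.comp_id]
            exact hnat φ } }
    refine ⟨b1, hc.desc E, hc.hom_ext fun i => ?_⟩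
    have hfac : c.ι.app i ≫ hc.desc E = h i ≫ F.map (homOfLE hb0b1) := hc.fac E i
    show c.ι.app i ≫ f = c.ι.app i ≫ (hc.desc E ≫ s.ι.app b1)
    rw [← Category.assoc, hfac, Category.assoc, s.w (homOfLE hb0b1), hh i]
  · -- injectivity: maps identified in the colimit are identified at a stage
    intro j1 j2 g1 g2 hg
    dsimp at hg
    have key : ∀ i : I, ∃ k : J, ∃ _ : j1 ≤ k, ∃ _ : j2 ≤ k,
        (c.ι.app i ≫ g1) ≫ F.map (homOfLE ‹j1 ≤ k›) =
        (c.ι.app i ≫ g2) ≫ F.map (homOfLE ‹j2 ≤ k›) := by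
      intro i
      have heq : ((coyoneda.obj (op (D.obj i))).mapCocone s).ι.app j1 (c.ι.app i ≫ g1)
          = ((coyoneda.obj (op (D.obj i))).mapCocone s).ι.app j2 (c.ι.app i ≫ g2) := by
        dsimp
        rw [Category.assoc, Category.assoc, hg]
      rw [Types.FilteredColimit.isColimit_eq_iff _ (hcol i)] at heq
      obtain ⟨k, u, v, huv⟩ := heq
      dsimp at huv
      refine ⟨k, leOfHom u, leOfHom v, ?_⟩
      rw [show (homOfLE (leOfHom u) : j1 ⟶ k) = u from Subsingleton.elim _ _,
        show (homOfLE (leOfHom v) : j2 ⟶ k) = v from Subsingleton.elim _ _]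
      exact huv
    choose k hk1 hk2 hk3 using key
    obtain ⟨bk, hbk⟩ := hubI hIcard k
    obtain ⟨z1, hz1a, hz1b⟩ := directed_of (· ≤ ·) bk j1
    obtain ⟨z, hza, hzb⟩ := directed_of (· ≤ ·) z1 j2
    have hj1z : j1 ≤ z := hz1b.trans hza
    have hj2z : j2 ≤ z := hzb
    refine ⟨z, homOfLE hj1z, homOfLE hj2z, ?_⟩
    dsimp
    apply hc.hom_ext
    intro i
    have hkz : k i ≤ z := ((hbk i).trans hz1a).trans hza
    have e1 : (homOfLE hj1z : j1 ⟶ z) = homOfLE (hk1 i) ≫ homOfLE hkz :=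
      Subsingleton.elim _ _
    have e2 : (homOfLE hj2z : j2 ⟶ z) = homOfLE (hk2 i) ≫ homOfLE hkz :=
      Subsingleton.elim _ _
    rw [← Category.assoc, ← Category.assoc, e1, e2, F.map_comp, F.map_comp,
      ← Category.assoc, ← Category.assoc, hk3 i]
end

section
/- For every infinite ordinal α, the constructible level L_α has cardinality |α|. -/
open Cardinal FirstOrder

universe u

/-- The definable power set operation: `y ∈ DefSets X` iff `y` is a `ZFSet` all of whose
elements lie in `X`, and the corresponding subset of `X` is first-order definable (with
parameters) in the structure `(X, ∈)`. -/
def DefSets (X : Set ZFSet.{u}) : Set ZFSet.{u} :=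
  letI : LE ↥X := ⟨fun a b => (a : ZFSet) ∈ (b : ZFSet)⟩
  letI : Language.order.Structure ↥X := Language.orderStructure ↥X
  { y | (∀ z : ZFSet, z ∈ y → z ∈ X) ∧
    Set.Definable₁ (Set.univ : Set ↥X) Language.order { z : ↥X | (z : ZFSet) ∈ y } }

theorem mem_defSets_iff (X : Set ZFSet.{u}) (y : ZFSet.{u}) :
    y ∈ DefSets X ↔
      letI : LE ↥X := ⟨fun a b => (a : ZFSet) ∈ (b : ZFSet)⟩
      letI : Language.order.Structure ↥X := Language.orderStructure ↥X
      ((∀ z : ZFSet, z ∈ y → z ∈ X) ∧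
        Set.Definable₁ (Set.univ : Set ↥X) Language.order { z : ↥X | (z : ZFSet) ∈ y }) :=
  Iff.rfl

/-- The set `{z ∈ X | z ∈ y}` is definable with parameter `y` when `y ∈ X`. -/
theorem definable_mem (X : Set ZFSet.{u}) {y : ZFSet.{u}} (hy : y ∈ X) :
    letI : LE ↥X := ⟨fun a b => (a : ZFSet) ∈ (b : ZFSet)⟩
    letI : Language.order.Structure ↥X := Language.orderStructure ↥X
    Set.Definable₁ (Set.univ : Set ↥X) Language.order { z : ↥X | (z : ZFSet) ∈ y } := by
  letI : LE ↥X := ⟨fun a b => (a : ZFSet) ∈ (b : ZFSet)⟩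
  letI : Language.order.Structure ↥X := Language.orderStructure ↥X
  rw [Set.Definable₁, Set.definable_iff_exists_formula_sum]
  refine ⟨Language.Term.le (L := Language.order)
      (Language.Term.var (Sum.inl (Sum.inr 0)))
      (Language.Term.var (Sum.inl (Sum.inl ⟨⟨y, hy⟩, Set.mem_univ _⟩))), ?_⟩
  ext v
  simp only [Set.mem_setOf_eq, Language.Formula.Realize, Language.Term.le,
    Language.Relations.boundedFormula₂, Language.Relations.boundedFormula,
    Language.BoundedFormula.Realize, Language.Term.realize_var]
  exact Iff.rfl

/-- If `X` is transitive then `X ⊆ DefSets X`. -/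
theorem mem_defSets_of_transitive (X : Set ZFSet.{u})
    (hX : ∀ y ∈ X, ∀ z : ZFSet, z ∈ y → z ∈ X) {y : ZFSet.{u}} (hy : y ∈ X) :
    y ∈ DefSets X :=
  (mem_defSets_iff X y).mpr ⟨fun z hz => hX y hy z hz, definable_mem X hy⟩

/-- `DefSets` preserves transitivity. -/
theorem defSets_transitive (X : Set ZFSet.{u})
    (hX : ∀ y ∈ X, ∀ z : ZFSet, z ∈ y → z ∈ X) :
    ∀ y ∈ DefSets X, ∀ z : ZFSet, z ∈ y → z ∈ DefSets X := fun y hy z hz =>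
  mem_defSets_of_transitive X hX (((mem_defSets_iff X y).mp hy).1 z hz)

/-- A `ZFSet` whose extension is exactly `X` lies in `DefSets X`. -/
theorem mem_defSets_univ (X : Set ZFSet.{u}) (x : ZFSet.{u})
    (hx : ∀ z : ZFSet, z ∈ x ↔ z ∈ X) : x ∈ DefSets X := by
  letI : LE ↥X := ⟨fun a b => (a : ZFSet) ∈ (b : ZFSet)⟩
  letI : Language.order.Structure ↥X := Language.orderStructure ↥X
  rw [mem_defSets_iff]
  refine ⟨fun z hz => (hx z).mp hz, ?_⟩
  have h1 : {z : ↥X | (z : ZFSet) ∈ x} = Set.univ :=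
    Set.eq_univ_of_forall fun z => (hx z).mpr z.2
  rw [Set.Definable₁, h1]
  have h2 : {v : Fin 1 → ↥X | v 0 ∈ (Set.univ : Set ↥X)} = Set.univ := by
    ext v; simp
  rw [h2]
  exact Set.definable_univ

/-- Cardinality bound for the definable power set. -/
theorem defSets_card (X : Set ZFSet.{u}) : #(DefSets X) ≤ max ℵ₀ #X := by
  letI : LE ↥X := ⟨fun a b => (a : ZFSet) ∈ (b : ZFSet)⟩
  letI : Language.order.Structure ↥X := Language.orderStructure ↥X
  have step1 : #(DefSets X) ≤
      #{s : Set (Fin 1 → ↥X) // Set.Definable (Set.univ : Set ↥X) Language.order s} := by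
    refine mk_le_of_injective (f := fun y : ↥(DefSets X) =>
      (⟨{v : Fin 1 → ↥X | v 0 ∈ {z : ↥X | (z : ZFSet) ∈ (y : ZFSet)}},
        ((mem_defSets_iff X y).mp y.2).2⟩ : {s : Set (Fin 1 → ↥X) //
          Set.Definable (Set.univ : Set ↥X) Language.order s})) ?_
    intro y₁ y₂ h
    have hs : {v : Fin 1 → ↥X | v 0 ∈ {z : ↥X | (z : ZFSet) ∈ (y₁ : ZFSet)}} =
        {v : Fin 1 → ↥X | v 0 ∈ {z : ↥X | (z : ZFSet) ∈ (y₂ : ZFSet)}} :=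
      congrArg Subtype.val h
    have key : ∀ z : ↥X, (z : ZFSet) ∈ (y₁ : ZFSet) ↔ (z : ZFSet) ∈ (y₂ : ZFSet) := by
      intro z
      have := Set.ext_iff.mp hs (fun _ => z)
      simpa using this
    apply Subtype.ext
    apply ZFSet.ext
    intro w
    constructor
    · intro hw
      exact (key ⟨w, ((mem_defSets_iff X y₁).mp y₁.2).1 w hw⟩).mp hw
    · intro hw
      exact (key ⟨w, ((mem_defSets_iff X y₂).mp y₂.2).1 w hw⟩).mpr hw
  have step2 : #{s : Set (Fin 1 → ↥X) //
      Set.Definable (Set.univ : Set ↥X) Language.order s} ≤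
      #((Language.order[[(Set.univ : Set ↥X)]]).Formula (Fin 1)) := by
    refine mk_le_of_injective (f := fun s => Classical.choose s.2) ?_
    intro s₁ s₂ h
    have h' : Classical.choose s₁.2 = Classical.choose s₂.2 := h
    apply Subtype.ext
    rw [Classical.choose_spec s₁.2, Classical.choose_spec s₂.2, h']
  have step3 : #((Language.order[[(Set.univ : Set ↥X)]]).Formula (Fin 1)) ≤ max ℵ₀ #X := by
    have h1 : #((Language.order[[(Set.univ : Set ↥X)]]).Formula (Fin 1)) ≤
        #(Σ n, (Language.order[[(Set.univ : Set ↥X)]]).BoundedFormula (Fin 1) n) :=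
      mk_le_of_injective (f := fun φ => ⟨0, φ⟩) (fun a b h => by simpa using h)
    have h2 := Language.BoundedFormula.card_le
      (L := Language.order[[(Set.univ : Set ↥X)]]) (α := Fin 1)
    refine (h1.trans h2).trans ?_
    rw [Language.card_withConstants, Language.order.card_eq_one]
    simp only [mk_univ, mk_fintype, Fintype.card_fin, Nat.cast_one, lift_one, lift_id', lift_id]
    have hm : ℵ₀ ≤ max ℵ₀ #X := le_max_left _ _
    refine max_le hm ?_
    have : (1 : Cardinal) + (1 + #↥X) ≤ (max ℵ₀ #↥X) + ((max ℵ₀ #↥X) + (max ℵ₀ #↥X)) := by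
      gcongr
      · exact one_le_aleph0.trans hm
      · exact one_le_aleph0.trans hm
      · exact le_max_right _ _
    refine this.trans ?_
    rw [add_eq_self hm, add_eq_self hm]
  exact (step1.trans step2).trans step3

/-- For every infinite ordinal `α`, the constructible level `L_α` has cardinality `|α|`.
Here the constructible hierarchy is any function `L` on ordinals satisfying the defining
recursion: `L 0 = ∅`, `L (α+1) = Def(L α)`, and `L β = ⋃_{α<β} L α` at limits. -/
theorem stmt12 (L : Ordinal.{u} → Set ZFSet.{u})
    (h0 : L 0 = ∅)
    (hsucc : ∀ α : Ordinal.{u}, L (α + 1) = DefSets (L α))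
    (hlim : ∀ β : Ordinal.{u}, Order.IsSuccLimit β → L β = ⋃ α ∈ Set.Iio β, L α)
    (α : Ordinal.{u}) (hα : Ordinal.omega0 ≤ α) :
    #(L α) = Cardinal.lift.{u + 1} α.card := by
  -- transitivity of each level
  have htrans : ∀ β : Ordinal.{u}, ∀ y ∈ L β, ∀ z : ZFSet, z ∈ y → z ∈ L β := by
    intro β
    induction β using Ordinal.induction with
    | h β IH =>
      rcases Ordinal.zero_or_succ_or_isSuccLimit β with h | ⟨γ, rfl⟩ | h
      · subst h; rw [h0]; rintro y ⟨⟩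
      · rw [← Ordinal.add_one_eq_succ, hsucc]
        exact defSets_transitive _ (IH γ (Order.lt_succ γ))
      · rw [hlim β h]
        rintro y hy z hz
        simp only [Set.mem_iUnion, Set.mem_Iio, exists_prop] at hy ⊢
        obtain ⟨γ, hγ, hyγ⟩ := hy
        exact ⟨γ, hγ, IH γ hγ y hyγ z hz⟩
  -- monotonicity
  have mono : ∀ δ γ : Ordinal.{u}, γ ≤ δ → L γ ⊆ L δ := by
    intro δ
    induction δ using Ordinal.induction with
    | h δ IH =>
      intro γ hγ
      rcases eq_or_lt_of_le hγ with rfl | hlt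
      · exact subset_rfl
      rcases Ordinal.zero_or_succ_or_isSuccLimit δ with h | ⟨δ', rfl⟩ | h
      · subst h; exact absurd hlt (by simp)
      · have hγ' : γ ≤ δ' := Order.lt_succ_iff.mp hlt
        rw [← Ordinal.add_one_eq_succ, hsucc]
        intro y hy
        exact mem_defSets_of_transitive _ (htrans δ')
          (IH δ' (Order.lt_succ δ') γ hγ' hy)
      · rw [hlim δ h]
        intro y hy
        exact Set.mem_biUnion hlt hy
  -- every level is the extension of an actual ZFSet
  have ext : ∀ β : Ordinal.{u}, ∃ x : ZFSet.{u}, ∀ z : ZFSet, z ∈ x ↔ z ∈ L β := by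
    intro β
    induction β using Ordinal.induction with
    | h β IH =>
      rcases Ordinal.zero_or_succ_or_isSuccLimit β with h | ⟨γ, rfl⟩ | h
      · subst h
        exact ⟨∅, by simp [h0, ZFSet.notMem_empty]⟩
      · obtain ⟨x, hx⟩ := IH γ (Order.lt_succ γ)
        rw [← Ordinal.add_one_eq_succ]
        refine ⟨ZFSet.sep (· ∈ L (γ + 1)) (ZFSet.powerset x), ?_⟩
        intro z
        rw [ZFSet.mem_sep]
        constructor
        · exact fun hz => hz.2
        · intro hz
          refine ⟨ZFSet.mem_powerset.mpr fun w hw => ?_, hz⟩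
          rw [hsucc] at hz
          exact (hx w).mpr (((mem_defSets_iff _ _).mp hz).1 w hw)
      · choose f hf using IH
        set g : β.ToType → ZFSet.{u} := fun i =>
          f ((Ordinal.ToType.mk (o := β)).symm i).1 ((Ordinal.ToType.mk (o := β)).symm i).2 with hg
        refine ⟨ZFSet.sUnion (ZFSet.range.{u, u} g), ?_⟩
        intro z
        rw [ZFSet.mem_sUnion]
        constructor
        · rintro ⟨w, hw, hzw⟩
          rw [ZFSet.mem_range] at hw
          obtain ⟨i, rfl⟩ := hw
          have hz : z ∈ L ((Ordinal.ToType.mk (o := β)).symm i).1 := (hf _ _ z).mp hzw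
          rw [hlim β h]
          exact Set.mem_biUnion ((Ordinal.ToType.mk (o := β)).symm i).2 hz
        · intro hz
          rw [hlim β h] at hz
          simp only [Set.mem_iUnion, Set.mem_Iio, exists_prop] at hz
          obtain ⟨γ, hγ, hzγ⟩ := hz
          refine ⟨g ((Ordinal.ToType.mk (o := β)) ⟨γ, hγ⟩), ?_, ?_⟩
          · rw [ZFSet.mem_range]; exact ⟨_, rfl⟩
          · have he : (Ordinal.ToType.mk (o := β)).symm ((Ordinal.ToType.mk (o := β)) ⟨γ, hγ⟩) =
                ⟨γ, hγ⟩ := OrderIso.symm_apply_apply _ _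
            rw [hg]
            simp only [he]
            exact (hf γ hγ z).mpr hzγ
  choose xL hxL using ext
  have hxmem : ∀ β : Ordinal.{u}, xL β ∈ L (β + 1) := by
    intro β
    rw [hsucc]
    exact mem_defSets_univ _ _ (hxL β)
  have hxnot : ∀ β : Ordinal.{u}, xL β ∉ L β := fun β h =>
    ZFSet.mem_irrefl _ ((hxL β (xL β)).mpr h)
  -- lower bound
  have lower : Cardinal.lift.{u + 1} α.card ≤ #(L α) := by
    rw [← Ordinal.mk_Iio_ordinal]
    refine mk_le_of_injective (f := fun γ : Set.Iio α =>
      (⟨xL γ, mono α (γ + 1) (by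
        rw [Ordinal.add_one_eq_succ]; exact Order.succ_le_iff.mpr γ.2) (hxmem γ)⟩ :
        ↥(L α))) ?_
    intro γ δ h
    have hx : xL γ.1 = xL δ.1 := congrArg Subtype.val h
    have hL : ∀ z : ZFSet, z ∈ L γ.1 ↔ z ∈ L δ.1 := by
      intro z
      rw [← hxL γ.1 z, ← hxL δ.1 z, hx]
    rcases lt_trichotomy γ.1 δ.1 with hlt | heq | hlt
    · exfalso
      refine hxnot δ.1 ?_
      rw [← hx]
      exact mono δ.1 (γ.1 + 1) (by
        rw [Ordinal.add_one_eq_succ]; exact Order.succ_le_iff.mpr hlt) (hxmem γ.1)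
    · exact Subtype.ext heq
    · exfalso
      refine hxnot γ.1 ?_
      rw [hx]
      exact mono γ.1 (δ.1 + 1) (by
        rw [Ordinal.add_one_eq_succ]; exact Order.succ_le_iff.mpr hlt) (hxmem δ.1)
  -- upper bound
  have upper : ∀ β : Ordinal.{u}, #(L β) ≤ max ℵ₀ (Cardinal.lift.{u + 1} β.card) := by
    intro β
    induction β using Ordinal.induction with
    | h β IH =>
      rcases Ordinal.zero_or_succ_or_isSuccLimit β with h | ⟨γ, rfl⟩ | h
      · subst h; rw [h0]; simp
      · rw [← Ordinal.add_one_eq_succ, hsucc]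
        refine (defSets_card (L γ)).trans ?_
        refine max_le (le_max_left _ _) ?_
        refine ((IH γ (Order.lt_succ γ)).trans ?_)
        refine max_le (le_max_left _ _) (le_max_of_le_right ?_)
        exact lift_le.mpr (Ordinal.card_le_card (le_of_lt (Order.lt_succ γ)))
      · rw [hlim β h]
        have hβ : ℵ₀ ≤ Cardinal.lift.{u + 1} β.card := by
          rw [← lift_aleph0.{u + 1, u}]
          exact lift_le.mpr (Ordinal.aleph0_le_card.mpr (Ordinal.omega0_le_of_isSuccLimit h))
        refine le_max_of_le_right ?_
        calc #(⋃ γ ∈ Set.Iio β, L γ)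
            ≤ #(Set.Iio β) * ⨆ γ : Set.Iio β, #(L γ.1) := mk_biUnion_le L (Set.Iio β)
          _ ≤ Cardinal.lift.{u + 1} β.card * Cardinal.lift.{u + 1} β.card := by
              refine mul_le_mul' (le_of_eq (Ordinal.mk_Iio_ordinal β)) ?_
              refine ciSup_le' fun γ => (IH γ.1 γ.2).trans ?_
              refine max_le hβ ?_
              exact lift_le.mpr (Ordinal.card_le_card (le_of_lt γ.2))
          _ = Cardinal.lift.{u + 1} β.card := mul_eq_self hβ
  have hαc : ℵ₀ ≤ Cardinal.lift.{u + 1} α.card := by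
    rw [← lift_aleph0.{u + 1, u}]
    exact lift_le.mpr (Ordinal.aleph0_le_card.mpr hα)
  exact le_antisymm ((upper α).trans_eq (max_eq_right hαc)) lower
end
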